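/- arXiv:2601.14189 — 4 statements merged into one kernel-verified Lean document; each statement's English description precedes it below -/
import Mathlib

section
/- For all integers n ≥ 1 and real t > 0, the finite sum \sum_{i=1}^{n} (t;t^2)_i (t^{2n};t^2)_i (t^{-2n};t^2)_i t^{2i} / ((-t;t^2)_i (-t^2;t^2)_i (t^2;t^2)_i) equals 2t^n/(1+t^{2n}) - 1, where (a;q)_i = \prod_{j=0}^{i-1}(1 - a q^j) is the q-Pochhammer symbol. (The sum may equivalently be extended to infinity since (t^{-2n};t^2)_i = 0 for i > n.) -/
/-- The q-Pochhammer symbol `(a;q)_n = ∏_{j=0}^{n-1} (1 - a q^j)`. -/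
noncomputable def qPoch (a q : ℝ) (n : ℕ) : ℝ := ∏ j ∈ Finset.range n, (1 - a * q ^ j)

lemma qPoch_zero (a q : ℝ) : qPoch a q 0 = 1 := by simp [qPoch]

lemma qPoch_succ (a q : ℝ) (n : ℕ) :
    qPoch a q (n + 1) = qPoch a q n * (1 - a * q ^ n) := by
  simp [qPoch, Finset.prod_range_succ]

lemma qPoch_shift (a q : ℝ) (i : ℕ) :
    (1 - a) * qPoch (a * q) q i = qPoch a q i * (1 - a * q ^ i) := by
  induction i with
  | zero => simp [qPoch_zero]
  | succ k ih =>
    rw [qPoch_succ, qPoch_succ]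
    linear_combination (1 - a * q ^ (k + 1)) * ih

lemma qPoch_div (a q : ℝ) (hq : q ≠ 0) (j : ℕ) :
    qPoch (a / q) q (j + 1) = (1 - a / q) * qPoch a q j := by
  induction j with
  | zero => simp [qPoch_succ, qPoch_zero]
  | succ k ih =>
    rw [qPoch_succ, ih, qPoch_succ]
    field_simp
    ring

lemma pow_ne_one' (x : ℝ) (hx : 0 < x) (h1 : x ≠ 1) (k : ℕ) (hk : k ≠ 0) : x ^ k ≠ 1 := by
  rcases h1.lt_or_gt with h | h
  · exact ne_of_lt (pow_lt_one₀ hx.le h hk)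
  · exact ne_of_gt (one_lt_pow₀ h hk)

/-- the summand -/
noncomputable def qT (t : ℝ) (n i : ℕ) : ℝ :=
  qPoch t (t ^ 2) i * qPoch (t ^ (2 * n)) (t ^ 2) i *
    qPoch ((t ^ (2 * n))⁻¹) (t ^ 2) i * t ^ (2 * i) /
    (qPoch (-t) (t ^ 2) i * qPoch (-t ^ 2) (t ^ 2) i * qPoch (t ^ 2) (t ^ 2) i)

/-- the WZ certificate function -/
noncomputable def qG (t : ℝ) (n i : ℕ) : ℝ :=
  (t * t ^ (2 * n) - 1) / (t ^ 2 * ((t ^ (2 * n)) ^ 2 - 1)) *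
    ((t + t ^ (2 * i)) * (1 - t ^ (2 * i) * t ^ (2 * i))) *
    (qPoch t (t ^ 2) i * qPoch (t ^ (2 * n)) (t ^ 2) i *
      qPoch ((t ^ (2 * n))⁻¹) (t ^ 2) (i - 1)) /
    (qPoch (-t) (t ^ 2) i * qPoch (-t ^ 2) (t ^ 2) i * qPoch (t ^ 2) (t ^ 2) i)

section facts
variable (t : ℝ) (ht : 0 < t) (ht1 : t ≠ 1)

include ht in
lemma qPoch_negt_pos (i : ℕ) : 0 < qPoch (-t) (t ^ 2) i := by
  refine Finset.prod_pos fun j _ => ?_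
  have : 0 < t * (t ^ 2) ^ j := by positivity
  nlinarith

include ht in
lemma qPoch_negq_pos (i : ℕ) : 0 < qPoch (-t ^ 2) (t ^ 2) i := by
  refine Finset.prod_pos fun j _ => ?_
  have : 0 < t ^ 2 * (t ^ 2) ^ j := by positivity
  nlinarith

include ht ht1 in
lemma ht2ne1 : t ^ 2 ≠ 1 := by
  intro h
  exact ht1 (by nlinarith)

include ht ht1 in
lemma qPoch_q_ne (i : ℕ) : qPoch (t ^ 2) (t ^ 2) i ≠ 0 := by
  rw [qPoch, Finset.prod_ne_zero_iff]
  intro j _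
  have : (t ^ 2) ^ (j + 1) ≠ 1 :=
    pow_ne_one' _ (by positivity) (ht2ne1 t ht ht1) _ (by omega)
  intro h
  apply this
  rw [pow_succ]
  nlinarith [h]

end facts

/-- The per-index WZ identity. -/
lemma wz_step (t : ℝ) (ht : 0 < t) (ht1 : t ≠ 1) (n m : ℕ) (hn : 1 ≤ n) :
    qT t (n + 1) (m + 1) * ((1 + t ^ 2 * t ^ (2 * n)) / (t * (1 + t ^ (2 * n))))
      - qT t n (m + 1) = qG t n (m + 2) - qG t n (m + 1) := by
  have ht0 : t ≠ 0 := ne_of_gt ht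
  have hq0 : (t : ℝ) ^ 2 ≠ 0 := pow_ne_zero _ ht0
  have hyne1 : t ^ (2 * n) ≠ 1 := pow_ne_one' t ht ht1 _ (by omega)
  have hy0 : t ^ (2 * n) ≠ 0 := pow_ne_zero _ ht0
  have hy1 : 1 - t ^ (2 * n) ≠ 0 := sub_ne_zero.2 (by exact fun h => hyne1 h.symm)
  have hy1' : 1 + t ^ (2 * n) ≠ 0 := by positivity
  have hy2 : (t ^ (2 * n)) ^ 2 - 1 ≠ 0 := by
    intro h
    rcases mul_eq_zero.1 (show (1 - t ^ (2*n)) * (1 + t ^ (2*n)) = 0 by linear_combination -h)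
      with h' | h'
    · exact hy1 h'
    · exact hy1' h'
  have hC1 : qPoch (-t) (t ^ 2) (m + 1) ≠ 0 := ne_of_gt (qPoch_negt_pos t ht _)
  have hC2 : qPoch (-t ^ 2) (t ^ 2) (m + 1) ≠ 0 := ne_of_gt (qPoch_negq_pos t ht _)
  have hC3 : qPoch (t ^ 2) (t ^ 2) (m + 1) ≠ 0 := qPoch_q_ne t ht ht1 _
  have h1 : 1 + t * (t ^ 2 * (t ^ 2) ^ m) ≠ 0 := by positivity
  have h2 : 1 + t ^ 2 * (t ^ 2 * (t ^ 2) ^ m) ≠ 0 := by positivity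
  have h3 : (1 : ℝ) - t ^ 2 * (t ^ 2 * (t ^ 2) ^ m) ≠ 0 := by
    have : (t ^ 2) ^ (m + 2) ≠ 1 :=
      pow_ne_one' _ (by positivity) (ht2ne1 t ht ht1) _ (by omega)
    intro h
    apply this
    have : t ^ 2 * (t ^ 2 * (t ^ 2) ^ m) = (t ^ 2) ^ (m + 2) := by ring
    linarith [this ▸ h]
  -- rewrite the shifted q-Pochhammer symbols
  have eB2 : qPoch (t ^ (2 * (n + 1))) (t ^ 2) (m + 1)
      = qPoch (t ^ (2 * n)) (t ^ 2) (m + 1) * (1 - t ^ (2 * n) * (t ^ 2 * (t ^ 2) ^ m))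
        / (1 - t ^ (2 * n)) := by
    rw [eq_div_iff hy1]
    have h := qPoch_shift (t ^ (2 * n)) (t ^ 2) (m + 1)
    have harg : t ^ (2 * (n + 1)) = t ^ (2 * n) * t ^ 2 := by ring
    rw [harg]
    linear_combination h
  have eB3 : qPoch ((t ^ (2 * (n + 1)))⁻¹) (t ^ 2) (m + 1)
      = (1 - (t ^ (2 * n))⁻¹ / t ^ 2) * qPoch ((t ^ (2 * n))⁻¹) (t ^ 2) m := by
    have harg : (t ^ (2 * (n + 1)))⁻¹ = (t ^ (2 * n))⁻¹ / t ^ 2 := by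
      rw [show t ^ (2 * (n + 1)) = t ^ (2 * n) * t ^ 2 by ring]
      field_simp
    rw [harg, qPoch_div _ _ hq0]
  have eD3 : qPoch ((t ^ (2 * n))⁻¹) (t ^ 2) (m + 1)
      = qPoch ((t ^ (2 * n))⁻¹) (t ^ 2) m * (1 - (t ^ (2 * n))⁻¹ * (t ^ 2) ^ m) :=
    qPoch_succ _ _ _
  simp only [qT, qG, Nat.add_sub_cancel]
  rw [show (m + 2) - 1 = m + 1 by omega]
  rw [qPoch_succ t (t ^ 2) (m + 1), qPoch_succ (t ^ (2 * n)) (t ^ 2) (m + 1),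
    qPoch_succ (-t) (t ^ 2) (m + 1), qPoch_succ (-t ^ 2) (t ^ 2) (m + 1),
    qPoch_succ (t ^ 2) (t ^ 2) (m + 1), eB2, eB3, eD3]
  rw [show t ^ (2 * (m + 1)) = t ^ 2 * (t ^ 2) ^ m by ring,
    show t ^ (2 * (m + 2)) = t ^ 2 * (t ^ 2 * (t ^ 2) ^ m) by ring,
    show (t ^ 2) ^ (m + 1) = t ^ 2 * (t ^ 2) ^ m by ring]
  have hyinv : (t ^ (2 * n))⁻¹ = 1 / t ^ (2 * n) := by rw [inv_eq_one_div]
  rw [hyinv]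
  have h1' : (1 : ℝ) - -(t ^ 3 * (t ^ 2) ^ m) ≠ 0 := by
    have : 0 < t ^ 3 * (t ^ 2) ^ m := by positivity
    exact ne_of_gt (by linarith)
  have h2' : (1 : ℝ) - -(t ^ 4 * (t ^ 2) ^ m) ≠ 0 := by
    have : 0 < t ^ 4 * (t ^ 2) ^ m := by positivity
    exact ne_of_gt (by linarith)
  have h3' : (1 : ℝ) - t ^ 4 * (t ^ 2) ^ m ≠ 0 := by
    rw [show t ^ 4 * (t ^ 2) ^ m = t ^ 2 * (t ^ 2 * (t ^ 2) ^ m) by ring]; exact h3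
  field_simp
  ring

lemma sum_aux (t : ℝ) (ht : 0 < t) (ht1 : t ≠ 1) :
    ∀ n, 1 ≤ n → ∑ i ∈ Finset.range (n + 1), qT t n i = 2 * t ^ n / (1 + t ^ (2 * n)) := by
  have ht0 : t ≠ 0 := ne_of_gt ht
  intro n hn
  induction n, hn using Nat.le_induction with
  | base =>
    have h1 : (1 : ℝ) + t ≠ 0 := by positivity
    have h2 : (1 : ℝ) + t ^ 2 ≠ 0 := by positivity
    have h3 : (1 : ℝ) - t ^ 2 ≠ 0 := sub_ne_zero.2 fun h => ht2ne1 t ht ht1 h.symm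
    simp only [Finset.sum_range_succ, Finset.sum_range_zero]
    simp only [qT, qPoch_succ, qPoch_zero, mul_one, one_mul, pow_zero, pow_one,
      Nat.mul_one, Nat.mul_zero]
    rw [show (1 : ℝ) - -t = 1 + t by ring, show (1 : ℝ) - -t ^ 2 = 1 + t ^ 2 by ring]
    field_simp
    ring
  | succ n hn ih =>
    have hy0 : t ^ (2 * n) ≠ 0 := pow_ne_zero _ ht0
    have hy1' : (1 : ℝ) + t ^ (2 * n) ≠ 0 := by positivity
    have hs2 : (1 : ℝ) + t ^ 2 * t ^ (2 * n) ≠ 0 := by positivity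
    have H : ∀ m : ℕ,
        (∑ i ∈ Finset.range (m + 1), qT t (n + 1) i) *
            ((1 + t ^ 2 * t ^ (2 * n)) / (t * (1 + t ^ (2 * n))))
          = (∑ i ∈ Finset.range (m + 1), qT t n i) + qG t n (m + 1) := by
      intro m
      induction m with
      | zero =>
        simp only [Nat.zero_add, zero_add, Finset.sum_range_one]
        have h1 : (1 : ℝ) + t ≠ 0 := by positivity
        have h2 : (1 : ℝ) + t ^ 2 ≠ 0 := by positivity
        have h3 : (1 : ℝ) - t ^ 2 ≠ 0 := sub_ne_zero.2 fun h => ht2ne1 t ht ht1 h.symm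
        have hyne1 : t ^ (2 * n) ≠ 1 := pow_ne_one' t ht ht1 _ (by omega)
        have hy1 : 1 - t ^ (2 * n) ≠ 0 := sub_ne_zero.2 fun h => hyne1 h.symm
        have hy2 : (t ^ (2 * n)) ^ 2 - 1 ≠ 0 := by
          intro h
          rcases mul_eq_zero.1
            (show (1 - t ^ (2*n)) * (1 + t ^ (2*n)) = 0 by linear_combination -h) with h' | h'
          · exact hy1 h'
          · exact hy1' h'
        simp only [qT, qG, qPoch_succ, qPoch_zero, Nat.sub_self, pow_zero, mul_one, one_mul,
          Nat.mul_zero]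
        rw [show (1 : ℝ) - -t = 1 + t by ring, show (1 : ℝ) - -t ^ 2 = 1 + t ^ 2 by ring]
        field_simp
        ring
      | succ k ihk =>
        rw [Finset.sum_range_succ, Finset.sum_range_succ (f := qT t n)]
        have hw := wz_step t ht ht1 n k hn
        linear_combination ihk + hw
    have Hn := H (n + 1)
    have hz1 : qT t n (n + 1) = 0 := by
      have : qPoch ((t ^ (2 * n))⁻¹) (t ^ 2) (n + 1) = 0 := by
        rw [qPoch]
        refine Finset.prod_eq_zero (Finset.self_mem_range_succ n) ?_
        rw [(pow_mul t 2 n).symm, inv_mul_cancel₀ hy0]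
        ring
      simp [qT, this]
    have hz2 : qG t n (n + 2) = 0 := by
      have h0 : qPoch ((t ^ (2 * n))⁻¹) (t ^ 2) (n + 1) = 0 := by
        rw [qPoch]
        refine Finset.prod_eq_zero (Finset.self_mem_range_succ n) ?_
        rw [(pow_mul t 2 n).symm, inv_mul_cancel₀ hy0]
        ring
      simp only [qG, show n + 2 - 1 = n + 1 by omega, h0]
      simp
    rw [Finset.sum_range_succ (f := qT t n), hz1, add_zero, ih, hz2, add_zero] at Hn
    have hgoal : t ^ (2 * (n + 1)) = t ^ 2 * t ^ (2 * n) := by ring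
    rw [hgoal]
    rw [eq_div_iff hs2]
    field_simp at Hn
    apply mul_right_cancel₀ hy1'
    linear_combination (1 + t ^ (2 * n)) * Hn

theorem sum_qPoch_eq (n : ℕ) (hn : 1 ≤ n) (t : ℝ) (ht : 0 < t) (ht1 : t ≠ 1) :
    ∑ i ∈ Finset.Icc 1 n,
      qPoch t (t ^ 2) i * qPoch (t ^ (2 * n)) (t ^ 2) i *
        qPoch ((t ^ (2 * n))⁻¹) (t ^ 2) i * t ^ (2 * i) /
        (qPoch (-t) (t ^ 2) i * qPoch (-t ^ 2) (t ^ 2) i * qPoch (t ^ 2) (t ^ 2) i)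
      = 2 * t ^ n / (1 + t ^ (2 * n)) - 1 := by
  have key := sum_aux t ht ht1 n hn
  have h0 : qT t n 0 = 1 := by simp [qT, qPoch_zero]
  have : ∑ i ∈ Finset.Icc 1 n, qT t n i
      = ∑ i ∈ Finset.range (n + 1), qT t n i - qT t n 0 := by
    rw [← Finset.Ico_add_one_right_eq_Icc, Finset.sum_Ico_eq_sub _ (by omega : 1 ≤ n + 1),
      Finset.sum_range_one]
  calc ∑ i ∈ Finset.Icc 1 n,
      qPoch t (t ^ 2) i * qPoch (t ^ (2 * n)) (t ^ 2) i *
        qPoch ((t ^ (2 * n))⁻¹) (t ^ 2) i * t ^ (2 * i) /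
        (qPoch (-t) (t ^ 2) i * qPoch (-t ^ 2) (t ^ 2) i * qPoch (t ^ 2) (t ^ 2) i)
      = ∑ i ∈ Finset.Icc 1 n, qT t n i := rfl
    _ = 2 * t ^ n / (1 + t ^ (2 * n)) - 1 := by rw [this, key, h0]
end

section
/- For all integers n ≥ 0 and real t > 0 with t ≠ 1, the q-Saalschütz identity specializes to: (-1;t^2)_n (-t^{-(2n-1)};t^2)_n / ((-t;t^2)_n (-t^{-2n};t^2)_n) = 2 t^n / (1 + t^{2n}). -/
open Finset

lemma zpow_sum_range (t : ℝ) (ht : t ≠ 0) (e : ℕ → ℤ) (n : ℕ) :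
    t ^ (∑ j ∈ range n, e j) = ∏ j ∈ range n, t ^ (e j) := by
  induction n with
  | zero => simp
  | succ n ih => rw [sum_range_succ, prod_range_succ, zpow_add₀ ht, ih]

lemma flip_prod (t : ℝ) (ht : t ≠ 0) (e : ℕ → ℤ) (n : ℕ) :
    ∏ j ∈ range n, (1 + t ^ (e j)) =
      t ^ (∑ j ∈ range n, e j) * ∏ j ∈ range n, (1 + t ^ (-(e j))) := by
  rw [zpow_sum_range t ht, ← prod_mul_distrib]
  refine prod_congr rfl fun j _ => ?_
  rw [mul_add, mul_one, ← zpow_add₀ ht, add_neg_cancel, zpow_zero, add_comm]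

lemma sum_lin (c : ℤ) (n : ℕ) : ∑ j ∈ range n, (c + 2 * (j : ℤ)) = n * c + n * (n - 1) := by
  induction n with
  | zero => simp
  | succ m ih => rw [sum_range_succ, ih]; push_cast; ring

/-- the q-Saalschütz specialization. Here `t^{-(2n-1)} = t^(1 - 2n)`
(as an integer power, valid also for `n = 0`). -/
theorem q_saalschutz_special (n : ℕ) (t : ℝ) (ht : 0 < t) (ht1 : t ≠ 1) :
    qPoch (-1) (t ^ 2) n * qPoch (-(t ^ (1 - 2 * (n : ℤ)))) (t ^ 2) n /
      (qPoch (-t) (t ^ 2) n * qPoch (-(t ^ (2 * n))⁻¹) (t ^ 2) n)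
      = 2 * t ^ n / (1 + t ^ (2 * n)) := by
  have ht0 : t ≠ 0 := ht.ne'
  have hq : ∀ j : ℕ, ((t ^ 2) ^ j : ℝ) = t ^ (2 * (j : ℤ)) := fun j => by
    rw [← pow_mul, ← zpow_natCast]; push_cast; ring_nf
  have h1 : qPoch (-1) (t ^ 2) n = ∏ j ∈ range n, (1 + t ^ (2 * (j : ℤ))) := by
    refine prod_congr rfl fun j _ => ?_
    rw [hq j]; ring
  have h2 : qPoch (-(t ^ (1 - 2 * (n : ℤ)))) (t ^ 2) n =
      ∏ j ∈ range n, (1 + t ^ (1 - 2 * (n : ℤ) + 2 * j)) := by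
    refine prod_congr rfl fun j _ => ?_
    rw [hq j, zpow_add₀ ht0]; ring
  have h3 : qPoch (-t) (t ^ 2) n = ∏ j ∈ range n, (1 + t ^ (2 * (j : ℤ) + 1)) := by
    refine prod_congr rfl fun j _ => ?_
    rw [hq j, zpow_add₀ ht0, zpow_one]; ring
  have h4 : qPoch (-(t ^ (2 * n))⁻¹) (t ^ 2) n =
      ∏ j ∈ range n, (1 + t ^ (2 * (j : ℤ) - 2 * n)) := by
    refine prod_congr rfl fun j _ => ?_
    rw [hq j, zpow_sub₀ ht0, show (2 * (n : ℤ)) = ((2 * n : ℕ) : ℤ) by push_cast; ring,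
      zpow_natCast]
    ring
  rw [h1, h2, h3, h4]
  set A : ℝ := ∏ j ∈ range n, (1 + t ^ (2 * (j : ℤ))) with hA
  set B : ℝ := ∏ j ∈ range n, (1 + t ^ (2 * (j : ℤ) + 1)) with hBdef
  set A' : ℝ := ∏ j ∈ range n, (1 + t ^ (2 * (j : ℤ) + 2)) with hA'
  have hB : ∏ j ∈ range n, (1 + t ^ (1 - 2 * (n : ℤ) + 2 * j)) =
      t ^ (-(n : ℤ) ^ 2) * B := by
    rw [flip_prod t ht0]
    congr 1
    · congr 1
      rw [show (fun j : ℕ => (1 - 2 * (n : ℤ) + 2 * j)) = fun j : ℕ => ((1 - 2 * n) + 2 * (j:ℤ)) from rfl,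
        sum_lin]
      ring
    · rw [hBdef, ← prod_range_reflect (fun j : ℕ => (1 + t ^ (2 * (j : ℤ) + 1))) n]
      refine prod_congr rfl fun j hj => ?_
      have hj' : j < n := mem_range.mp hj
      have he : -(1 - 2 * (n : ℤ) + 2 * j) = 2 * ((n - 1 - j : ℕ) : ℤ) + 1 := by omega
      rw [he]
  have hC : ∏ j ∈ range n, (1 + t ^ (2 * (j : ℤ) - 2 * n)) =
      t ^ (-((n : ℤ) ^ 2 + n)) * A' := by
    rw [flip_prod t ht0]
    congr 1
    · congr 1
      rw [show ∑ j ∈ range n, (2 * (j : ℤ) - 2 * n) = ∑ j ∈ range n, ((-2 * (n:ℤ)) + 2 * (j:ℤ))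
          from sum_congr rfl fun j _ => by ring, sum_lin]
      ring
    · rw [hA', ← prod_range_reflect (fun j : ℕ => (1 + t ^ (2 * (j : ℤ) + 2))) n]
      refine prod_congr rfl fun j hj => ?_
      have hj' : j < n := mem_range.mp hj
      have he : -(2 * (j : ℤ) - 2 * n) = 2 * ((n - 1 - j : ℕ) : ℤ) + 2 := by omega
      rw [he]
  rw [hB, hC]
  -- telescoping: A * (1 + t^(2n)) = 2 * A'
  have htel : A * (1 + t ^ (2 * n)) = 2 * A' := by
    have e1 := prod_range_succ (fun j : ℕ => (1 + t ^ (2 * (j : ℤ)))) n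
    have e2 := prod_range_succ' (fun j : ℕ => (1 + t ^ (2 * (j : ℤ)))) n
    rw [e2] at e1
    simp only [Nat.cast_zero, mul_zero, zpow_zero] at e1
    have e3 : ∀ j : ℕ, (1 + t ^ (2 * ((j : ℤ) + 1))) = (1 + t ^ (2 * (j : ℤ) + 2)) := by
      intro j; ring_nf
    simp only [Nat.cast_add, Nat.cast_one, e3] at e1
    rw [← hA, ← hA'] at e1
    rw [show (t : ℝ) ^ (2 * n) = t ^ (2 * (n : ℤ)) by
      rw [← zpow_natCast]; push_cast; ring_nf]
    linarith [e1]
  have hBpos : 0 < B := prod_pos fun j _ => by positivity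
  have hA'pos : 0 < A' := prod_pos fun j _ => by positivity
  have hdpos : (0:ℝ) < 1 + t ^ (2 * n) := by positivity
  have hzp : t ^ (-((n : ℤ) ^ 2 + n)) = t ^ (-(n : ℤ) ^ 2) * (t ^ n)⁻¹ := by
    rw [show -((n : ℤ) ^ 2 + n) = -(n : ℤ)^2 + (-(n:ℤ)) by ring, zpow_add₀ ht0,
      show t ^ (-(n:ℤ)) = (t ^ n)⁻¹ by rw [zpow_neg, zpow_natCast]]
  rw [hzp]
  have hxne : t ^ (-(n : ℤ) ^ 2) ≠ 0 := zpow_ne_zero _ ht0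
  have htn : (t : ℝ) ^ n ≠ 0 := pow_ne_zero _ ht0
  field_simp
  linear_combination htel
end

section
/- For every integer n ≥ 1 and every real z with z ≠ 0 and z^2 ≠ -1 (e.g. real z > 0), the identity \sum_{i=1}^{n} (-1)^i binom(2i-1, i-1) (1-z^2)^{2i} / (2^{4i-1} z^{2i}) = ((1+z)^2/(1+z^2)) ( ((1+z)^{2n}/(2^{2n} z^n)) \sum_{s=0}^{n} binom(n+s, s) (-1)^s (1-z)^{2s}/(4^s z^s) - 1 ) holds. -/
lemma aux1 (n : ℕ) (x : ℝ) :
    (∑ s ∈ Finset.range (n+1), ((n+1+s).choose s : ℝ) * x^s)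
      - ∑ s ∈ Finset.range (n+1), ((n+s).choose s : ℝ) * x^s
    = x * ∑ s ∈ Finset.range n, ((n+1+s).choose s : ℝ) * x^s := by
  rw [← Finset.sum_sub_distrib, Finset.sum_range_succ', Finset.mul_sum]
  simp only [Nat.add_zero, Nat.choose_zero_right, pow_zero]
  norm_num
  rw [← Finset.sum_sub_distrib]
  apply Finset.sum_congr rfl
  intro i _
  have e1 : n+1+(i+1) = (n+1+i)+1 := by omega
  have e2 : n+(i+1) = n+1+i := by omega
  rw [e1, e2, Nat.choose_succ_succ]
  push_cast
  ring

lemma key (n : ℕ) (x : ℝ) :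
    (1-x) * (∑ s ∈ Finset.range (n+1+1), ((n+1+s).choose s : ℝ) * x^s)
      - ∑ s ∈ Finset.range (n+1), ((n+s).choose s : ℝ) * x^s
    = ((2*n+1).choose n : ℝ) * x^(n+1) * (1-2*x) := by
  have h1 : (∑ s ∈ Finset.range (n+1+1), ((n+1+s).choose s : ℝ) * x^s)
      = (∑ s ∈ Finset.range (n+1), ((n+1+s).choose s : ℝ) * x^s)
        + ((n+1+(n+1)).choose (n+1) : ℝ) * x^(n+1) := Finset.sum_range_succ _ _
  have h2 : (∑ s ∈ Finset.range (n+1), ((n+1+s).choose s : ℝ) * x^s)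
      = (∑ s ∈ Finset.range n, ((n+1+s).choose s : ℝ) * x^s)
        + ((n+1+n).choose n : ℝ) * x^n := Finset.sum_range_succ _ _
  have h3 := aux1 n x
  have hc : ((n+1+(n+1)).choose (n+1) : ℝ) = 2 * ((2*n+1).choose n : ℝ) := by
    have e1 : n+1+(n+1) = (2*n+1)+1 := by omega
    rw [e1, Nat.choose_succ_succ]
    have e2 : (2*n+1).choose (n+1) = (2*n+1).choose n := by
      have := Nat.choose_symm (show n ≤ 2*n+1 by omega)
      rwa [show 2*n+1-n = n+1 by omega] at this
    rw [e2]
    push_cast; ring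
  have hc2 : ((n+1+n).choose n : ℝ) = ((2*n+1).choose n : ℝ) := by
    rw [show n+1+n = 2*n+1 by omega]
  linear_combination (1-x)*h1 - x*h2 + h3 + (1-x)*x^(n+1)*hc - x*x^n*hc2

lemma key2 (x : ℝ) (n : ℕ) :
    (1-2*x) * ∑ i ∈ Finset.Icc 1 n, 2 * ((2*i-1).choose (i-1) : ℝ) * (x*(1-x))^i
    = 2*(1-x) * ((1-x)^n * (∑ s ∈ Finset.range (n+1), ((n+s).choose s : ℝ) * x^s) - 1) := by
  induction n with
  | zero => simp
  | succ m ih =>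
      rw [Finset.sum_Icc_succ_top (show 1 ≤ m+1 by omega)]
      simp only [show 2*(m+1)-1 = 2*m+1 by omega, show (m+1)-1 = m by omega]
      have hmul : (x*(1-x))^(m+1) = x^(m+1)*(1-x)^(m+1) := mul_pow _ _ _
      linear_combination ih - 2*(1-x)^(m+1) * key m x
        + 2*((2*m+1).choose m : ℝ)*(1-2*x)*hmul

lemma hXs (z : ℝ) (hz : z ≠ 0) (s : ℕ) :
    (-(1-z)^2/(4*z))^s = (-1:ℝ)^s * (1-z)^(2*s) / (4^s * z^s) := by
  induction s with
  | zero => simp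
  | succ m ih =>
      rw [pow_succ, ih, pow_succ, pow_succ, show 2*(m+1) = 2*m+2 by omega,
        pow_add]
      field_simp
      ring

lemma h1X (z : ℝ) (hz : z ≠ 0) (n : ℕ) :
    (1 - (-(1-z)^2/(4*z)))^n = (1+z)^(2*n) / (2^(2*n) * z^n) := by
  have h : 1 - (-(1-z)^2/(4*z)) = (1+z)^2/(4*z) := by field_simp; ring
  rw [h, div_pow, mul_pow, ← pow_mul,
    show (4:ℝ)^n = 2^(2*n) from by rw [show (4:ℝ) = 2^2 by norm_num, ← pow_mul]]

lemma hXX (z : ℝ) (hz : z ≠ 0) (i : ℕ) :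
    ((-(1-z)^2/(4*z)) * (1 - (-(1-z)^2/(4*z))))^i
      = (-1:ℝ)^i * (1-z^2)^(2*i) / (2^(4*i) * z^(2*i)) := by
  rw [mul_pow, hXs z hz, h1X z hz]
  have h4 : (4:ℝ)^i = 2^(2*i) := by
    rw [show (4:ℝ) = 2^2 by norm_num, ← pow_mul]
  have hz1 : (1-z)^(2*i) * (1+z)^(2*i) = (1-z^2)^(2*i) := by
    rw [← mul_pow]; congr 1; ring
  rw [h4]
  field_simp
  have e1 : (2:ℝ)^(4*i) = 2^(2*i)*2^(2*i) := by rw [← pow_add]; congr 1; omega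
  have e2 : z^(2*i) = z^i*z^i := by rw [← pow_add]; congr 1; omega
  rw [← hz1, e1, e2]; ring

/-- F(n) = G(n) from the proof of Proposition `prop_limit`. -/
theorem F_eq_G (n : ℕ) (hn : 1 ≤ n) (z : ℝ) (hz : z ≠ 0) (hz2 : z ^ 2 ≠ -1) :
    ∑ i ∈ Finset.Icc 1 n,
        (-1 : ℝ) ^ i * (Nat.choose (2 * i - 1) (i - 1) : ℝ) *
          (1 - z ^ 2) ^ (2 * i) / (2 ^ (4 * i - 1) * z ^ (2 * i))
      = ((1 + z) ^ 2 / (1 + z ^ 2)) *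
          (((1 + z) ^ (2 * n) / (2 ^ (2 * n) * z ^ n)) *
              (∑ s ∈ Finset.range (n + 1),
                (Nat.choose (n + s) s : ℝ) * (-1 : ℝ) ^ s *
                  (1 - z) ^ (2 * s) / (4 ^ s * z ^ s)) - 1) := by
  have h1z2 : (1:ℝ) + z^2 ≠ 0 := fun h => hz2 (by linarith)
  set X : ℝ := -(1-z)^2/(4*z) with hXdef
  have hL : ∑ i ∈ Finset.Icc 1 n,
        (-1 : ℝ) ^ i * ((2 * i - 1).choose (i - 1) : ℝ) *
          (1 - z ^ 2) ^ (2 * i) / (2 ^ (4 * i - 1) * z ^ (2 * i))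
      = ∑ i ∈ Finset.Icc 1 n, 2 * ((2*i-1).choose (i-1) : ℝ) * (X*(1-X))^i := by
    apply Finset.sum_congr rfl
    intro i hi
    have hi1 : 1 ≤ i := (Finset.mem_Icc.mp hi).1
    rw [hXdef, hXX z hz i,
      show (2:ℝ)^(4*i) = 2^(4*i-1)*2 from by rw [← pow_succ]; congr 1; omega]
    have h2i : (2:ℝ)^(4*i-1) ≠ 0 := by positivity
    have hzi : z^(2*i) ≠ 0 := pow_ne_zero _ hz
    field_simp
  have hS : ∑ s ∈ Finset.range (n + 1),
        ((n + s).choose s : ℝ) * (-1 : ℝ) ^ s * (1 - z) ^ (2 * s) / (4 ^ s * z ^ s)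
      = ∑ s ∈ Finset.range (n + 1), ((n + s).choose s : ℝ) * X^s := by
    apply Finset.sum_congr rfl
    intro s _
    rw [hXdef, hXs z hz s]
    ring
  have hpre : (1 + z) ^ (2 * n) / (2 ^ (2 * n) * z ^ n) = (1-X)^n := (h1X z hz n).symm
  rw [hL, hS, hpre]
  have h12X : 1 - 2*X = (1+z^2)/(2*z) := by rw [hXdef]; field_simp; ring
  have h12X0 : 1 - 2*X ≠ 0 := by
    rw [h12X]
    exact div_ne_zero h1z2 (by simpa using hz)
  have hA : (1 + z)^2 / (1 + z^2) = 2*(1-X)/(1-2*X) := by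
    rw [h12X, show 1-X = (1+z)^2/(4*z) from by rw [hXdef]; field_simp; ring]
    field_simp
    ring
  rw [hA, div_mul_eq_mul_div (2*(1-X)) (1-2*X), eq_div_iff h12X0]
  linear_combination key2 X n
end

section
/- For every integer n ≥ 0 and real z > 0: ((1+z)^2/(2z)) ( 1 + ((1+z^2)/(1+z)^2) \sum_{i=1}^{n} (-1)^i binom(2i-1, i-1) (1-z^2)^{2i}/(2^{4i-1} z^{2i}) ) = ((1+z)^{2n+2}/(2^{2n+1} z^{n+1})) \sum_{s=0}^{n} binom(n+s, s) (-1)^s (1-z)^{2s}/(4^s z^s). -/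
lemma key_id (n : ℕ) (x : ℝ) :
    (1 - x) * ∑ s ∈ Finset.range (n + 2), ((n + 1 + s).choose s : ℝ) * x ^ s
      = (∑ s ∈ Finset.range (n + 1), ((n + s).choose s : ℝ) * x ^ s)
        + (1 - 2 * x) * ((2 * n + 1).choose n : ℝ) * x ^ (n + 1) := by
  have hT : ∑ s ∈ Finset.range (n + 2), ((n + 1 + s).choose s : ℝ) * x ^ s
      = 1 + ∑ s ∈ Finset.range (n + 1),
          (((n + 1 + s).choose (s + 1) : ℝ) + ((n + 1 + s).choose s : ℝ)) * x ^ (s + 1) := by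
    rw [Finset.sum_range_succ' (fun s => ((n + 1 + s).choose s : ℝ) * x ^ s) (n + 1)]
    rw [add_comm]
    congr 1
    · simp
    · apply Finset.sum_congr rfl
      intro s _
      have h : n + 1 + (s + 1) = (n + 1 + s) + 1 := by omega
      rw [h, Nat.choose_succ_succ']
      push_cast
      ring
  have hxT : x * ∑ s ∈ Finset.range (n + 2), ((n + 1 + s).choose s : ℝ) * x ^ s
      = (∑ s ∈ Finset.range (n + 1), ((n + 1 + s).choose s : ℝ) * x ^ (s + 1))
        + ((2 * n + 2).choose (n + 1) : ℝ) * x ^ (n + 2) := by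
    rw [Finset.mul_sum, Finset.sum_range_succ]
    have h : n + 1 + (n + 1) = 2 * n + 2 := by omega
    rw [h]
    congr 1
    · exact Finset.sum_congr rfl fun s _ => by ring
    · ring
  have hA : ∑ s ∈ Finset.range (n + 1), ((n + s).choose s : ℝ) * x ^ s
      = 1 + ∑ s ∈ Finset.range n, ((n + 1 + s).choose (s + 1) : ℝ) * x ^ (s + 1) := by
    rw [Finset.sum_range_succ' (fun s => ((n + s).choose s : ℝ) * x ^ s) n]
    rw [add_comm]
    congr 1
    · simp
    · apply Finset.sum_congr rfl
      intro s _
      have h : n + (s + 1) = n + 1 + s := by omega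
      rw [h]
  have hB : ∑ s ∈ Finset.range (n + 1), ((n + 1 + s).choose (s + 1) : ℝ) * x ^ (s + 1)
      = (∑ s ∈ Finset.range n, ((n + 1 + s).choose (s + 1) : ℝ) * x ^ (s + 1))
        + ((2 * n + 1).choose (n + 1) : ℝ) * x ^ (n + 1) := by
    rw [Finset.sum_range_succ]
    have h : n + 1 + n = 2 * n + 1 := by omega
    rw [h]
  have hc1 : (2 * n + 1).choose (n + 1) = (2 * n + 1).choose n := by
    rw [← Nat.choose_symm (by omega : n + 1 ≤ 2 * n + 1)]
    congr 1
    omega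
  have hc2 : (2 * n + 2).choose (n + 1) = 2 * (2 * n + 1).choose n := by
    have h : 2 * n + 2 = (2 * n + 1) + 1 := by omega
    rw [h, Nat.choose_succ_succ', hc1.symm]
    omega
  have expand : (1 - x) * ∑ s ∈ Finset.range (n + 2), ((n + 1 + s).choose s : ℝ) * x ^ s
      = (∑ s ∈ Finset.range (n + 2), ((n + 1 + s).choose s : ℝ) * x ^ s)
        - x * ∑ s ∈ Finset.range (n + 2), ((n + 1 + s).choose s : ℝ) * x ^ s := by ring
  have hsplit : ∑ s ∈ Finset.range (n + 1),
      (((n + 1 + s).choose (s + 1) : ℝ) + ((n + 1 + s).choose s : ℝ)) * x ^ (s + 1)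
      = (∑ s ∈ Finset.range (n + 1), ((n + 1 + s).choose (s + 1) : ℝ) * x ^ (s + 1))
        + ∑ s ∈ Finset.range (n + 1), ((n + 1 + s).choose s : ℝ) * x ^ (s + 1) := by
    rw [← Finset.sum_add_distrib]
    exact Finset.sum_congr rfl fun s _ => by ring
  rw [expand, hxT, hT, hsplit, hB, hA, hc1, hc2]
  push_cast
  ring

lemma abs_id (n : ℕ) (y : ℝ) :
    (1 - y) + (1 - 2 * y) *
        ∑ i ∈ Finset.Icc 1 n, ((2 * i - 1).choose (i - 1) : ℝ) * (y * (1 - y)) ^ i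
      = (1 - y) ^ (n + 1) * ∑ s ∈ Finset.range (n + 1), ((n + s).choose s : ℝ) * y ^ s := by
  induction n with
  | zero => norm_num
  | succ n ih =>
    rw [Finset.sum_Icc_succ_top (by omega : 1 ≤ n + 1)]
    have h2 : 2 * (n + 1) - 1 = 2 * n + 1 := by omega
    have h3 : n + 1 - 1 = n := by omega
    rw [h2, h3, mul_add, ← add_assoc, ih]
    have hk := key_id n y
    have hstep : (1 - y) ^ (n + 1 + 1) *
        ∑ s ∈ Finset.range (n + 1 + 1), ((n + 1 + s).choose s : ℝ) * y ^ s
        = (1 - y) ^ (n + 1) *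
          ((1 - y) * ∑ s ∈ Finset.range (n + 2), ((n + 1 + s).choose s : ℝ) * y ^ s) := by
      ring
    rw [hstep, hk, mul_pow]
    ring

/-- the limit symbol of the Dubuc–Deslauriers scheme. -/
theorem limit_symbol_eq (n : ℕ) (z : ℝ) (hz : 0 < z) :
    ((1 + z) ^ 2 / (2 * z)) *
        (1 + ((1 + z ^ 2) / (1 + z) ^ 2) *
            ∑ i ∈ Finset.Icc 1 n,
              (-1 : ℝ) ^ i * (Nat.choose (2 * i - 1) (i - 1) : ℝ) *
                (1 - z ^ 2) ^ (2 * i) / (2 ^ (4 * i - 1) * z ^ (2 * i)))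
      = ((1 + z) ^ (2 * n + 2) / (2 ^ (2 * n + 1) * z ^ (n + 1))) *
          ∑ s ∈ Finset.range (n + 1),
            (Nat.choose (n + s) s : ℝ) * (-1 : ℝ) ^ s *
              (1 - z) ^ (2 * s) / (4 ^ s * z ^ s) := by
  have hz0 : z ≠ 0 := hz.ne'
  have hz1 : (1 + z) ≠ 0 := by positivity
  obtain ⟨y, hy⟩ : ∃ y : ℝ, y = -((1 - z) ^ 2 / (4 * z)) := ⟨_, rfl⟩
  have h1y : 1 - y = (1 + z) ^ 2 / (4 * z) := by
    rw [hy]; field_simp; ring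
  have h1y0 : 1 - y ≠ 0 := by
    rw [h1y]; positivity
  have h12y : 1 - 2 * y = (1 + z ^ 2) / (2 * z) := by
    rw [hy]; field_simp; ring
  have hyy : y * (1 - y) = -((1 - z ^ 2) ^ 2 / (16 * z ^ 2)) := by
    rw [h1y, hy]; field_simp; ring
  have hsumL : ∑ i ∈ Finset.Icc 1 n,
      (-1 : ℝ) ^ i * (Nat.choose (2 * i - 1) (i - 1) : ℝ) *
        (1 - z ^ 2) ^ (2 * i) / (2 ^ (4 * i - 1) * z ^ (2 * i))
      = 2 * ∑ i ∈ Finset.Icc 1 n, ((2 * i - 1).choose (i - 1) : ℝ) * (y * (1 - y)) ^ i := by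
    rw [Finset.mul_sum]
    apply Finset.sum_congr rfl
    intro i hi
    have hi1 : 1 ≤ i := (Finset.mem_Icc.mp hi).1
    have hkey : (y * (1 - y)) ^ i = (-1) ^ i * (1 - z ^ 2) ^ (2 * i) / (2 ^ (4 * i) * z ^ (2 * i)) := by
      rw [hyy, neg_pow, div_pow, mul_pow, ← pow_mul, ← pow_mul]
      have h16 : (16 : ℝ) ^ i = 2 ^ (4 * i) := by
        rw [pow_mul]; norm_num
      rw [h16]
      ring
    rw [hkey]
    have hp : (2 : ℝ) ^ (4 * i) = 2 ^ (4 * i - 1) * 2 := by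
      rw [← pow_succ]
      congr 1
      omega
    rw [hp]
    have hne : (2 : ℝ) ^ (4 * i - 1) ≠ 0 := by positivity
    have hne2 : z ^ (2 * i) ≠ 0 := by positivity
    field_simp
  have hsumR : ∑ s ∈ Finset.range (n + 1),
      (Nat.choose (n + s) s : ℝ) * (-1 : ℝ) ^ s * (1 - z) ^ (2 * s) / (4 ^ s * z ^ s)
      = ∑ s ∈ Finset.range (n + 1), ((n + s).choose s : ℝ) * y ^ s := by
    apply Finset.sum_congr rfl
    intro s _
    have hkey : y ^ s = (-1) ^ s * (1 - z) ^ (2 * s) / (4 ^ s * z ^ s) := by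
      rw [hy, neg_pow, div_pow, mul_pow, ← pow_mul]
      ring
    rw [hkey]
    ring
  rw [hsumL, hsumR]
  have habs := abs_id n y
  have e1 : (1 + z) ^ 2 = 4 * z * (1 - y) := by
    rw [h1y]
    field_simp
  have e2 : 1 + z ^ 2 = 2 * z * (1 - 2 * y) := by
    rw [h12y]
    field_simp
  have e3 : (1 + z) ^ (2 * n + 2) = 4 ^ (n + 1) * z ^ (n + 1) * (1 - y) ^ (n + 1) := by
    have h : 2 * n + 2 = 2 * (n + 1) := by omega
    rw [h, pow_mul, e1, mul_pow, mul_pow]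
  have e4 : (2 : ℝ) ^ (2 * n + 1) = 2 * 4 ^ n := by
    rw [pow_succ, pow_mul]
    norm_num [mul_comm]
  rw [e1, e2, e3, e4]
  have h4n : (4 : ℝ) ^ n ≠ 0 := by positivity
  have hzn : z ^ (n + 1) ≠ 0 := by positivity
  have h1yn : (1 - y) ^ (n + 1) ≠ 0 := pow_ne_zero _ h1y0
  trans (2 * ((1 - y) + (1 - 2 * y) *
      ∑ i ∈ Finset.Icc 1 n, ((2 * i - 1).choose (i - 1) : ℝ) * (y * (1 - y)) ^ i))
  · field_simp
    ring
  · rw [habs, pow_succ]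
    field_simp
    ring
end
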